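/- Let N = 2n+1 be odd with n ≥ 1, let R = N + 2, and let λ : Fin R → ℝ be non-increasing with λ₁ = 1, λ_{2k} = λ_{2k+1} ≥ 0 for k = 1, …, (N+1)/2, and ∑_k λ k = N. Then there exists an alternating x : (Fin N → Fin R) → ℂ with ∑_f |x f|² = N! whose one-particle reduced density matrix γ (with entries γ a b = (1/(N−1)!) ∑_{j : Fin (N−1) → Fin R} x (a ::ᵥ j) * conj (x (b ::ᵥ j))) is the diagonal matrix with diagonal entries λ₁, …, λ_R. -/

import Mathlib

open Equiv Finset

namespace ColemanAux

variable {M R : ℕ}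

noncomputable def slater (e f : Fin M → Fin R) : ℂ :=
  ∑ σ : Equiv.Perm (Fin M), ((Equiv.Perm.sign σ : ℤ) : ℂ) * (if f = e ∘ σ then 1 else 0)

lemma mul_slater_expand (e f : Fin M → Fin R) (z : ℂ) :
    z * slater e f = ∑ σ : Equiv.Perm (Fin M),
      (if f = e ∘ σ then ((Equiv.Perm.sign σ : ℤ) : ℂ) * z else 0) := by
  rw [slater, Finset.mul_sum]
  refine Finset.sum_congr rfl fun σ _ => ?_
  split_ifs with h <;> simp <;> ring

lemma slater_eq_zero {e f : Fin M → Fin R} (h : ∀ σ : Equiv.Perm (Fin M), f ≠ e ∘ σ) :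
    slater e f = 0 := by
  unfold slater
  refine Finset.sum_eq_zero fun σ _ => ?_
  rw [if_neg (h σ), mul_zero]

lemma exists_of_slater_ne_zero {e f : Fin M → Fin R} (h : slater e f ≠ 0) :
    ∃ σ : Equiv.Perm (Fin M), f = e ∘ σ := by
  by_contra hc
  push_neg at hc
  exact h (slater_eq_zero hc)

lemma conj_slater (e f : Fin M → Fin R) : (starRingEnd ℂ) (slater e f) = slater e f := by
  unfold slater
  rw [map_sum]
  refine Finset.sum_congr rfl fun σ _ => ?_
  rw [map_mul]
  congr 1
  · simp
  · split_ifs <;> simp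

lemma slater_self {e : Fin M → Fin R} (he : Function.Injective e) (σ : Equiv.Perm (Fin M)) :
    slater e (e ∘ σ) = ((Equiv.Perm.sign σ : ℤ) : ℂ) := by
  unfold slater
  rw [Finset.sum_eq_single σ]
  · simp
  · intro σ' _ hne
    rw [if_neg, mul_zero]
    intro hcomp
    exact hne (Equiv.ext fun x => (he (congrFun hcomp x))).symm
  · simp

lemma comp_equiv_cancel {α β γ : Type*} (τ : α ≃ β) {f g : β → γ} :
    f ∘ τ = g ∘ τ ↔ f = g := by
  constructor
  · intro h
    funext b
    simpa using congrFun h (τ.symm b)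
  · intro h; rw [h]

lemma slater_comp (e f : Fin M → Fin R) (τ : Equiv.Perm (Fin M)) :
    slater e (f ∘ τ) = ((Equiv.Perm.sign τ : ℤ) : ℂ) * slater e f := by
  unfold slater
  rw [Finset.mul_sum]
  rw [← Equiv.sum_comp (Equiv.mulRight τ)
    (fun σ => ((Equiv.Perm.sign σ : ℤ) : ℂ) * (if f ∘ ⇑τ = e ∘ σ then 1 else 0))]
  refine Finset.sum_congr rfl fun σ _ => ?_
  have h1 : ((Equiv.mulRight τ) σ : Equiv.Perm (Fin M)) = σ * τ := rfl
  rw [h1]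
  have h2 : e ∘ ⇑(σ * τ) = (e ∘ σ) ∘ τ := rfl
  rw [h2]
  have h3 : (f ∘ ⇑τ = (e ∘ ⇑σ) ∘ ⇑τ) ↔ (f = e ∘ σ) := comp_equiv_cancel τ
  have h4 : ((Equiv.Perm.sign (σ * τ) : ℤ) : ℂ)
      = ((Equiv.Perm.sign σ : ℤ) : ℂ) * ((Equiv.Perm.sign τ : ℤ) : ℂ) := by
    rw [map_mul]; push_cast; ring
  rw [h4]
  by_cases hc : f = e ∘ σ
  · rw [if_pos (h3.mpr hc), if_pos hc]; ring
  · rw [if_neg (fun hh => hc (h3.mp hh)), if_neg hc]; ring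

lemma sign_sq (σ : Equiv.Perm (Fin M)) :
    ((Equiv.Perm.sign σ : ℤ) : ℂ) * ((Equiv.Perm.sign σ : ℤ) : ℂ) = 1 := by
  rcases Int.units_eq_one_or (Equiv.Perm.sign σ) with h | h <;> rw [h] <;> norm_num

lemma slater_norm {e : Fin M → Fin R} (he : Function.Injective e) :
    ∑ f : Fin M → Fin R, slater e f * slater e f = (Nat.factorial M : ℂ) := by
  calc ∑ f : Fin M → Fin R, slater e f * slater e f
      = ∑ f : Fin M → Fin R, ∑ σ : Equiv.Perm (Fin M),
          (if f = e ∘ σ then ((Equiv.Perm.sign σ : ℤ) : ℂ) * slater e f else 0) := by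
        exact Finset.sum_congr rfl fun f _ => mul_slater_expand e f _
    _ = ∑ σ : Equiv.Perm (Fin M), ∑ f : Fin M → Fin R,
          (if f = e ∘ σ then ((Equiv.Perm.sign σ : ℤ) : ℂ) * slater e f else 0) :=
        Finset.sum_comm
    _ = ∑ σ : Equiv.Perm (Fin M), ((Equiv.Perm.sign σ : ℤ) : ℂ) * slater e (e ∘ σ) := by
        refine Finset.sum_congr rfl fun σ _ => ?_
        rw [Finset.sum_ite_eq' Finset.univ (e ∘ ⇑σ)
          (fun f => ((Equiv.Perm.sign σ : ℤ) : ℂ) * slater e f), if_pos (Finset.mem_univ _)]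
    _ = ∑ _σ : Equiv.Perm (Fin M), (1 : ℂ) := by
        refine Finset.sum_congr rfl fun σ _ => ?_
        rw [slater_self he, sign_sq]
    _ = (Nat.factorial M : ℂ) := by
        simp [Finset.card_univ, Fintype.card_perm]

lemma perm_eq_of_tail {e : Fin (M+1) → Fin R} (he : Function.Injective e)
    {σ σ' : Equiv.Perm (Fin (M+1))}
    (h : ∀ i : Fin M, e (σ i.succ) = e (σ' i.succ)) : σ = σ' := by
  have hs : ∀ i : Fin M, σ i.succ = σ' i.succ := fun i => he (h i)
  have h0 : σ 0 = σ' 0 := by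
    rcases Fin.eq_zero_or_eq_succ (σ.symm (σ' 0)) with hy | ⟨i, hy⟩
    · have h1 : σ (σ.symm (σ' 0)) = σ' 0 := σ.apply_symm_apply _
      rw [hy] at h1
      exact h1
    · exfalso
      have h1 : σ (σ.symm (σ' 0)) = σ' 0 := σ.apply_symm_apply _
      rw [hy] at h1
      rw [hs i] at h1
      have := σ'.injective h1
      exact (Fin.succ_ne_zero i) this
  refine Equiv.ext fun x => ?_
  induction x using Fin.cases with
  | zero => exact h0
  | succ i => exact hs i

lemma count_head (e : Fin (M+1) → Fin R) (he : Function.Injective e) (a : Fin R) :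
    ∑ σ : Equiv.Perm (Fin (M+1)), (if a = e (σ 0) then (1:ℂ) else 0)
      = if ∃ i, e i = a then (Nat.factorial M : ℂ) else 0 := by
  by_cases hex : ∃ i, e i = a
  · obtain ⟨i₀, hi₀⟩ := hex
    rw [if_pos ⟨i₀, hi₀⟩]
    have hcond : ∀ σ : Equiv.Perm (Fin (M+1)), (a = e (σ 0)) ↔ (σ 0 = i₀) := by
      intro σ
      constructor
      · intro h
        exact he (by rw [hi₀, ← h])
      · intro h
        rw [h, hi₀]
    calc ∑ σ : Equiv.Perm (Fin (M+1)), (if a = e (σ 0) then (1:ℂ) else 0)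
        = ∑ σ : Equiv.Perm (Fin (M+1)), (if σ 0 = i₀ then (1:ℂ) else 0) :=
          Finset.sum_congr rfl fun σ _ => if_congr (hcond σ) rfl rfl
      _ = ∑ pt : Fin (M+1) × Equiv.Perm (Fin M), (if pt.1 = i₀ then (1:ℂ) else 0) := by
          refine (Fintype.sum_equiv Equiv.Perm.decomposeFin.symm _ _ fun pt => ?_).symm
          obtain ⟨p, τ⟩ := pt
          rw [Equiv.Perm.decomposeFin_symm_apply_zero]
      _ = (Nat.factorial M : ℂ) := by
          rw [Fintype.sum_prod_type]
          have hinner : ∀ p : Fin (M+1), (∑ _τ : Equiv.Perm (Fin M), (if p = i₀ then (1:ℂ) else 0))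
              = if p = i₀ then (Nat.factorial M : ℂ) else 0 := by
            intro p
            split_ifs <;> simp [Finset.card_univ, Fintype.card_perm]
          rw [Finset.sum_congr rfl fun p _ => hinner p,
            Finset.sum_ite_eq' Finset.univ i₀ (fun _ => (Nat.factorial M : ℂ)),
            if_pos (Finset.mem_univ _)]
  · rw [if_neg hex]
    exact Finset.sum_eq_zero fun σ _ => if_neg (fun h => hex ⟨σ 0, h.symm⟩)

lemma cons_eq_comp_iff (e : Fin (M+1) → Fin R) (b : Fin R) (j : Fin M → Fin R)
    (σ : Equiv.Perm (Fin (M+1))) :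
    (Fin.cons b j = e ∘ σ) ↔ (b = e (σ 0) ∧ j = Fin.tail (e ∘ σ)) := by
  constructor
  · intro h
    refine ⟨?_, ?_⟩
    · have := congrFun h 0
      simpa using this
    · funext i
      have := congrFun h i.succ
      simpa [Fin.tail] using this
  · rintro ⟨h1, h2⟩
    rw [h1, h2]
    have : e (σ 0) = (e ∘ σ) 0 := rfl
    rw [this, Fin.cons_self_tail]

lemma slater_cons_tail {e : Fin (M+1) → Fin R} (he : Function.Injective e) (a : Fin R)
    (σ : Equiv.Perm (Fin (M+1))) :
    slater e (Fin.cons a (Fin.tail (e ∘ σ)))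
      = if a = e (σ 0) then ((Equiv.Perm.sign σ : ℤ) : ℂ) else 0 := by
  by_cases ha : a = e (σ 0)
  · rw [if_pos ha, ha]
    have h1 : e (σ 0) = (e ∘ σ) 0 := rfl
    rw [h1, Fin.cons_self_tail, slater_self he]
  · rw [if_neg ha]
    apply slater_eq_zero
    intro σ' hcontra
    have h0 : a = e (σ' 0) := by
      have := congrFun hcontra 0
      simpa using this
    have htail : ∀ i : Fin M, e (σ' i.succ) = e (σ i.succ) := by
      intro i
      have := congrFun hcontra i.succ
      simpa [Fin.tail] using this.symm
    have hσ : σ' = σ := perm_eq_of_tail he htail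
    rw [hσ] at h0
    exact ha h0

lemma slater_cons_sum {e : Fin (M+1) → Fin R} (he : Function.Injective e) (a b : Fin R) :
    ∑ j : Fin M → Fin R, slater e (Fin.cons a j) * slater e (Fin.cons b j)
      = if a = b then (if ∃ i, e i = a then (Nat.factorial M : ℂ) else 0) else 0 := by
  have main : ∑ j : Fin M → Fin R, slater e (Fin.cons a j) * slater e (Fin.cons b j)
      = ∑ σ : Equiv.Perm (Fin (M+1)),
          (if b = e (σ 0) then
            (if a = e (σ 0) then (1 : ℂ) else 0) else 0) := by
    calc ∑ j : Fin M → Fin R, slater e (Fin.cons a j) * slater e (Fin.cons b j)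
        = ∑ j : Fin M → Fin R, ∑ σ : Equiv.Perm (Fin (M+1)),
            (if Fin.cons b j = e ∘ σ then
              ((Equiv.Perm.sign σ : ℤ) : ℂ) * slater e (Fin.cons a j) else 0) :=
          Finset.sum_congr rfl fun j _ => mul_slater_expand e _ _
      _ = ∑ σ : Equiv.Perm (Fin (M+1)), ∑ j : Fin M → Fin R,
            (if Fin.cons b j = e ∘ σ then
              ((Equiv.Perm.sign σ : ℤ) : ℂ) * slater e (Fin.cons a j) else 0) :=
          Finset.sum_comm
      _ = ∑ σ : Equiv.Perm (Fin (M+1)),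
            (if b = e (σ 0) then
              ((Equiv.Perm.sign σ : ℤ) : ℂ) * slater e (Fin.cons a (Fin.tail (e ∘ σ))) else 0) := by
          refine Finset.sum_congr rfl fun σ _ => ?_
          by_cases hb : b = e (σ 0)
          · rw [if_pos hb]
            have h1 : ∀ j : Fin M → Fin R, (Fin.cons b j = e ∘ σ) ↔ (j = Fin.tail (e ∘ σ)) := by
              intro j
              rw [cons_eq_comp_iff]
              exact and_iff_right hb
            calc ∑ j : Fin M → Fin R, (if Fin.cons b j = e ∘ σ then
                  ((Equiv.Perm.sign σ : ℤ) : ℂ) * slater e (Fin.cons a j) else 0)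
                = ∑ j : Fin M → Fin R, (if j = Fin.tail (e ∘ σ) then
                  ((Equiv.Perm.sign σ : ℤ) : ℂ) * slater e (Fin.cons a j) else 0) :=
                  Finset.sum_congr rfl fun j _ => if_congr (h1 j) rfl rfl
              _ = ((Equiv.Perm.sign σ : ℤ) : ℂ) * slater e (Fin.cons a (Fin.tail (e ∘ σ))) := by
                  rw [Finset.sum_ite_eq' Finset.univ (Fin.tail (e ∘ ⇑σ))
                    (fun j => ((Equiv.Perm.sign σ : ℤ) : ℂ) * slater e (Fin.cons a j)),
                    if_pos (Finset.mem_univ _)]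
          · rw [if_neg hb]
            refine Finset.sum_eq_zero fun j _ => ?_
            rw [if_neg]
            intro hcontra
            exact hb ((cons_eq_comp_iff e b j σ).mp hcontra).1
      _ = ∑ σ : Equiv.Perm (Fin (M+1)),
            (if b = e (σ 0) then (if a = e (σ 0) then (1 : ℂ) else 0) else 0) := by
          refine Finset.sum_congr rfl fun σ _ => ?_
          rw [slater_cons_tail he]
          split_ifs with h1 h2 <;> simp [sign_sq]
  rw [main]
  by_cases hab : a = b
  · subst hab
    rw [if_pos rfl]
    rw [← count_head e he a]
    refine Finset.sum_congr rfl fun σ _ => ?_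
    split_ifs with h1 h2 <;> first | rfl | (exfalso; tauto)
  · rw [if_neg hab]
    refine Finset.sum_eq_zero fun σ _ => ?_
    split_ifs with h1 h2 <;> first | rfl | (exfalso; exact hab (h2.trans h1.symm))

def eval (k i : ℕ) : ℕ :=
  if i = 0 then 0 else 2 * (if (i-1)/2 < k then (i-1)/2 else (i-1)/2 + 1) + 1 + (i-1) % 2

lemma eval_lt {n k i : ℕ} (hk : k ≤ n) (hi : i < 2*n+1) : eval k i < 2*n+3 := by
  unfold eval; split_ifs <;> omega

lemma eval_inj {n k : ℕ} (hk : k ≤ n) {i i' : ℕ} (hi : i < 2*n+1) (hi' : i' < 2*n+1)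
    (h : eval k i = eval k i') : i = i' := by
  unfold eval at h; split_ifs at h <;> omega

lemma eval_mem_iff {n k a : ℕ} (hk : k ≤ n) (ha : a < 2*n+3) :
    (∃ i, i < 2*n+1 ∧ eval k i = a) ↔ (a = 0 ∨ (1 ≤ a ∧ (a-1)/2 ≠ k)) := by
  constructor
  · rintro ⟨i, hi, rfl⟩
    unfold eval; split_ifs <;> omega
  · intro h
    rcases h with h | ⟨h1, h2⟩
    · exact ⟨0, by omega, by unfold eval; simp [h]⟩
    · by_cases hlt : (a-1)/2 < k
      · exact ⟨a, by omega, by unfold eval; split_ifs <;> omega⟩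
      · exact ⟨a - 2, by omega, by unfold eval; split_ifs <;> omega⟩

def E (n : ℕ) (k : Fin (n+1)) (i : Fin (2*n+1)) : Fin (2*n+3) :=
  ⟨eval k.1 i.1, eval_lt (Nat.lt_succ_iff.mp k.2) i.2⟩

lemma E_injective (n : ℕ) (k : Fin (n+1)) : Function.Injective (E n k) := by
  intro i i' h
  exact Fin.ext (eval_inj (Nat.lt_succ_iff.mp k.2) i.2 i'.2 (congrArg Fin.val h))

lemma E_mem (n : ℕ) (k : Fin (n+1)) (a : Fin (2*n+3)) :
    (∃ i, E n k i = a) ↔ (a.1 = 0 ∨ (1 ≤ a.1 ∧ (a.1-1)/2 ≠ k.1)) := by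
  rw [← eval_mem_iff (Nat.lt_succ_iff.mp k.2) a.2]
  constructor
  · rintro ⟨i, rfl⟩
    exact ⟨i.1, i.2, rfl⟩
  · rintro ⟨i, hi, hev⟩
    exact ⟨⟨i, hi⟩, Fin.ext hev⟩

lemma comp_ne {n : ℕ} {k k' : Fin (n+1)} (hne : k ≠ k') (σ σ' : Equiv.Perm (Fin (2*n+1)))
    (f : Fin (2*n+1) → Fin (2*n+3)) (h1 : f = E n k ∘ σ) (h2 : f = E n k' ∘ σ') : False := by
  have hkk : k.1 ≠ k'.1 := fun h => hne (Fin.ext h)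
  set t : Fin (2*n+3) := ⟨2*k'.1+1, by have := k'.2; omega⟩ with ht
  have htv : t.1 = 2*k'.1+1 := rfl
  have h3 : ∃ i, E n k i = t := by
    rw [E_mem]
    omega
  obtain ⟨i, hi⟩ := h3
  have e1 := congrFun (h1.symm.trans h2) (σ.symm i)
  rw [Function.comp_apply, Function.comp_apply, Equiv.apply_symm_apply, hi] at e1
  have h5 := (E_mem n k' t).mp ⟨_, e1.symm⟩
  omega

lemma cons_cross {n : ℕ} {k k' : Fin (n+1)} (hne : k ≠ k') (a b : Fin (2*n+3))
    (j : Fin (2*n) → Fin (2*n+3)) (σ σ' : Equiv.Perm (Fin (2*n+1)))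
    (h1 : (Fin.cons a j : Fin (2*n+1) → Fin (2*n+3)) = E n k ∘ σ)
    (h2 : (Fin.cons b j : Fin (2*n+1) → Fin (2*n+3)) = E n k' ∘ σ') : False := by
  have hkk : k.1 ≠ k'.1 := fun h => hne (Fin.ext h)
  have key : ∀ t : Fin (2*n+3), 1 ≤ t.1 → (t.1-1)/2 = k'.1 → t ≠ a → False := by
    intro t h1t h2t hta
    have h3 : ∃ i, E n k i = t := by
      rw [E_mem]
      omega
    obtain ⟨i, hi⟩ := h3
    have e1 : (Fin.cons a j : Fin (2*n+1) → Fin (2*n+3)) (σ.symm i) = t := by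
      rw [h1]
      show E n k (σ (σ.symm i)) = t
      rw [Equiv.apply_symm_apply, hi]
    rcases Fin.eq_zero_or_eq_succ (σ.symm i) with h0 | ⟨i', hi'⟩
    · rw [h0, Fin.cons_zero] at e1
      exact hta e1.symm
    · rw [hi', Fin.cons_succ] at e1
      have e2 : E n k' (σ' i'.succ) = t := by
        have h4 := congrFun h2 i'.succ
        rw [Fin.cons_succ, Function.comp_apply] at h4
        rw [← h4, e1]
      have h5 := (E_mem n k' t).mp ⟨_, e2⟩
      omega
  by_cases ha : a.1 = 2*k'.1+1
  · refine key ⟨2*k'.1+2, by have := k'.2; omega⟩ (by show 1 ≤ 2*k'.1+2; omega)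
      (by show (2*k'.1+2-1)/2 = k'.1; omega) ?_
    intro heq
    have := congrArg Fin.val heq
    simp at this
    omega
  · refine key ⟨2*k'.1+1, by have := k'.2; omega⟩ (by show 1 ≤ 2*k'.1+1; omega)
      (by show (2*k'.1+1-1)/2 = k'.1; omega) ?_
    intro heq
    have := congrArg Fin.val heq
    simp at this
    omega

noncomputable def xw (n : ℕ) (c : Fin (n+1) → ℝ) (f : Fin (2*n+1) → Fin (2*n+3)) : ℂ :=
  ∑ k : Fin (n+1), ((c k : ℝ) : ℂ) * slater (E n k) f

lemma xw_comp (n : ℕ) (c : Fin (n+1) → ℝ) (f : Fin (2*n+1) → Fin (2*n+3))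
    (τ : Equiv.Perm (Fin (2*n+1))) :
    xw n c (f ∘ τ) = ((Equiv.Perm.sign τ : ℤ) : ℂ) * xw n c f := by
  unfold xw
  rw [Finset.mul_sum]
  refine Finset.sum_congr rfl fun k _ => ?_
  rw [slater_comp]
  ring

lemma xw_zero_of_not_inj (n : ℕ) (c : Fin (n+1) → ℝ) (f : Fin (2*n+1) → Fin (2*n+3))
    (hf : ¬ Function.Injective f) : xw n c f = 0 := by
  unfold xw
  refine Finset.sum_eq_zero fun k _ => ?_
  rw [slater_eq_zero, mul_zero]
  intro σ hcontra
  rw [hcontra] at hf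
  exact hf ((E_injective n k).comp σ.injective)

lemma conj_xw (n : ℕ) (c : Fin (n+1) → ℝ) (f : Fin (2*n+1) → Fin (2*n+3)) :
    (starRingEnd ℂ) (xw n c f) = xw n c f := by
  unfold xw
  rw [map_sum]
  refine Finset.sum_congr rfl fun k _ => ?_
  rw [map_mul, conj_slater, Complex.conj_ofReal]

lemma key_overlap (n : ℕ) (k k' : Fin (n+1)) :
    ∑ f : Fin (2*n+1) → Fin (2*n+3), slater (E n k) f * slater (E n k') f
      = if k = k' then ((2*n+1).factorial : ℂ) else 0 := by
  by_cases h : k = k'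
  · subst h; rw [if_pos rfl]; exact slater_norm (E_injective n k)
  · rw [if_neg h]
    refine Finset.sum_eq_zero fun f _ => ?_
    by_contra hz
    have hz1 : slater (E n k) f ≠ 0 := fun h0 => hz (by rw [h0, zero_mul])
    have hz2 : slater (E n k') f ≠ 0 := fun h0 => hz (by rw [h0, mul_zero])
    obtain ⟨σ, hσ⟩ := exists_of_slater_ne_zero hz1
    obtain ⟨σ', hσ'⟩ := exists_of_slater_ne_zero hz2
    exact comp_ne h σ σ' f hσ hσ'

lemma key_pair (n : ℕ) (k k' : Fin (n+1)) (a b : Fin (2*n+3)) :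
    ∑ j : Fin (2*n) → Fin (2*n+3),
        slater (E n k) (Fin.cons a j) * slater (E n k') (Fin.cons b j)
      = if k = k' then
          (if a = b then (if ∃ i, E n k i = a then ((2*n).factorial : ℂ) else 0) else 0)
        else 0 := by
  by_cases h : k = k'
  · subst h
    rw [if_pos rfl]
    exact slater_cons_sum (E_injective n k) a b
  · rw [if_neg h]
    refine Finset.sum_eq_zero fun j _ => ?_
    by_contra hz
    have hz1 : slater (E n k) (Fin.cons a j) ≠ 0 := fun h0 => hz (by rw [h0, zero_mul])
    have hz2 : slater (E n k') (Fin.cons b j) ≠ 0 := fun h0 => hz (by rw [h0, mul_zero])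
    obtain ⟨σ, hσ⟩ := exists_of_slater_ne_zero hz1
    obtain ⟨σ', hσ'⟩ := exists_of_slater_ne_zero hz2
    exact cons_cross h a b j σ σ' hσ hσ'

lemma double_expand {ι : Type*} [Fintype ι] {α : Type*} [Fintype α]
    (c : ι → ℝ) (A B : ι → α → ℂ) :
    ∑ f : α, (∑ k, ((c k : ℝ) : ℂ) * A k f) * (∑ k', ((c k' : ℝ) : ℂ) * B k' f)
      = ∑ k, ∑ k', (((c k : ℝ) : ℂ) * ((c k' : ℝ) : ℂ)) * ∑ f, A k f * B k' f := by
  calc ∑ f : α, (∑ k, ((c k : ℝ) : ℂ) * A k f) * (∑ k', ((c k' : ℝ) : ℂ) * B k' f)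
      = ∑ f : α, ∑ k, ∑ k', (((c k : ℝ) : ℂ) * A k f) * (((c k' : ℝ) : ℂ) * B k' f) := by
        refine Finset.sum_congr rfl fun f _ => ?_
        rw [Finset.sum_mul_sum]
    _ = ∑ k, ∑ f : α, ∑ k', (((c k : ℝ) : ℂ) * A k f) * (((c k' : ℝ) : ℂ) * B k' f) :=
        Finset.sum_comm
    _ = ∑ k, ∑ k', ∑ f : α, (((c k : ℝ) : ℂ) * A k f) * (((c k' : ℝ) : ℂ) * B k' f) :=
        Finset.sum_congr rfl fun k _ => Finset.sum_comm
    _ = ∑ k, ∑ k', (((c k : ℝ) : ℂ) * ((c k' : ℝ) : ℂ)) * ∑ f, A k f * B k' f := by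
        refine Finset.sum_congr rfl fun k _ => Finset.sum_congr rfl fun k' _ => ?_
        rw [Finset.mul_sum]
        refine Finset.sum_congr rfl fun f _ => ?_
        ring

lemma xw_self_sum (n : ℕ) (c : Fin (n+1) → ℝ) :
    ∑ f : Fin (2*n+1) → Fin (2*n+3), xw n c f * xw n c f
      = (∑ k, (((c k : ℝ) : ℂ))^2) * ((2*n+1).factorial : ℂ) := by
  unfold xw
  rw [double_expand c (fun k f => slater (E n k) f) (fun k f => slater (E n k) f)]
  calc ∑ k, ∑ k', (((c k : ℝ):ℂ) * ((c k' : ℝ):ℂ)) * ∑ f, slater (E n k) f * slater (E n k') f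
      = ∑ k, ∑ k', (((c k : ℝ):ℂ) * ((c k' : ℝ):ℂ)) *
          (if k = k' then ((2*n+1).factorial : ℂ) else 0) := by
        refine Finset.sum_congr rfl fun k _ => Finset.sum_congr rfl fun k' _ => ?_
        rw [key_overlap]
    _ = ∑ k, (((c k : ℝ):ℂ))^2 * ((2*n+1).factorial : ℂ) := by
        refine Finset.sum_congr rfl fun k _ => ?_
        rw [Finset.sum_eq_single k]
        · rw [if_pos rfl]; ring
        · intro k' _ hne
          rw [if_neg (fun h => hne h.symm), mul_zero]
        · intro h; exact absurd (Finset.mem_univ k) h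
    _ = (∑ k, (((c k : ℝ):ℂ))^2) * ((2*n+1).factorial : ℂ) := by
        rw [Finset.sum_mul]

lemma xw_pair_sum (n : ℕ) (c : Fin (n+1) → ℝ) (a b : Fin (2*n+3)) :
    ∑ j : Fin (2*n) → Fin (2*n+3), xw n c (Fin.cons a j) * xw n c (Fin.cons b j)
      = if a = b then
          (∑ k, (((c k : ℝ):ℂ))^2 * (if ∃ i, E n k i = a then ((2*n).factorial : ℂ) else 0))
        else 0 := by
  unfold xw
  rw [double_expand c (fun k j => slater (E n k) (Fin.cons a j))
    (fun k j => slater (E n k) (Fin.cons b j))]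
  calc ∑ k, ∑ k', (((c k : ℝ):ℂ) * ((c k' : ℝ):ℂ)) *
          ∑ j, slater (E n k) (Fin.cons a j) * slater (E n k') (Fin.cons b j)
      = ∑ k, ∑ k', (((c k : ℝ):ℂ) * ((c k' : ℝ):ℂ)) *
          (if k = k' then
            (if a = b then (if ∃ i, E n k i = a then ((2*n).factorial : ℂ) else 0) else 0)
          else 0) := by
        refine Finset.sum_congr rfl fun k _ => Finset.sum_congr rfl fun k' _ => ?_
        rw [key_pair]
    _ = ∑ k, (((c k : ℝ):ℂ))^2 *
          (if a = b then (if ∃ i, E n k i = a then ((2*n).factorial : ℂ) else 0) else 0) := by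
        refine Finset.sum_congr rfl fun k _ => ?_
        rw [Finset.sum_eq_single k]
        · rw [if_pos rfl]; ring
        · intro k' _ hne
          rw [if_neg (fun h => hne h.symm), mul_zero]
        · intro h; exact absurd (Finset.mem_univ k) h
    _ = if a = b then
          (∑ k, (((c k : ℝ):ℂ))^2 * (if ∃ i, E n k i = a then ((2*n).factorial : ℂ) else 0))
        else 0 := by
        by_cases hab : a = b
        · rw [if_pos hab]
          exact Finset.sum_congr rfl fun k _ => by rw [if_pos hab]
        · rw [if_neg hab]
          exact Finset.sum_eq_zero fun k _ => by rw [if_neg hab, mul_zero]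

lemma pair_range_sum (g : ℕ → ℝ) (m : ℕ) :
    ∑ i ∈ Finset.range (2*m), g i = ∑ j ∈ Finset.range m, (g (2*j) + g (2*j+1)) := by
  induction m with
  | zero => simp
  | succ m ih =>
    rw [Finset.sum_range_succ, ← ih, show 2*(m+1) = (2*m)+1+1 by ring,
      Finset.sum_range_succ, Finset.sum_range_succ, add_assoc]

end ColemanAux




/-- **Coleman's theorem for odd `N` and rank `N + 2` (sufficiency).**
Let `N = 2n+1` (with `n ≥ 1`) and `R = N + 2`.  If `λ : Fin R → ℝ` is
non-increasing with `λ 0 = 1`, doubly degenerate nonnegative remaining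
eigenvalues `λ (2k+1) = λ (2k+2) ≥ 0` for `k = 0, …, n`, and `∑ λ = N`, then the
diagonal matrix `diag (λ)` is the one-particle reduced density matrix of some
alternating, normalized `N`-fermion wavefunction on `ℂ^R`. -/
theorem odd_N_rank_N_plus_two_sufficient
    (n : ℕ) (hn : 1 ≤ n)
    (lam : Fin (2 * n + 3) → ℝ)
    (hmono : ∀ i j : Fin (2 * n + 3), i ≤ j → lam j ≤ lam i)
    (h0 : lam 0 = 1)
    (hpair : ∀ k : Fin (n + 1),
        lam ⟨2 * k.1 + 1, by have := k.2; omega⟩ = lam ⟨2 * k.1 + 2, by have := k.2; omega⟩)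
    (hpos : ∀ k : Fin (n + 1), 0 ≤ lam ⟨2 * k.1 + 1, by have := k.2; omega⟩)
    (hsum : ∑ k, lam k = (2 * n + 1 : ℝ)) :
    ∃ x : (Fin (2 * n + 1) → Fin (2 * n + 3)) → ℂ,
      (∀ (σ : Equiv.Perm (Fin (2 * n + 1))) (f : Fin (2 * n + 1) → Fin (2 * n + 3)),
          x (f ∘ σ) = ((Equiv.Perm.sign σ : ℤ) : ℂ) * x f) ∧
      (∀ f, ¬ Function.Injective f → x f = 0) ∧
      (∑ f, ‖x f‖ ^ 2 = (Nat.factorial (2 * n + 1) : ℝ)) ∧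
      (∀ a b, (1 / (Nat.factorial (2 * n) : ℂ)) *
          ∑ j : Fin (2 * n) → Fin (2 * n + 3),
            x (Matrix.vecCons a j) * (starRingEnd ℂ) (x (Matrix.vecCons b j))
        = Matrix.diagonal (fun i => (lam i : ℂ)) a b) := by
  classical
  have hn3 : 0 < 2*n+3 := by omega
  -- orbital indices
  set o : Fin (n+1) → Fin (2*n+3) := fun k => ⟨2*k.1+1, by have := k.2; omega⟩ with ho
  set oo : Fin (n+1) → Fin (2*n+3) := fun k => ⟨2*k.1+2, by have := k.2; omega⟩ with hoo
  have hpair' : ∀ k : Fin (n+1), lam (o k) = lam (oo k) := hpair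
  have hpos' : ∀ k : Fin (n+1), 0 ≤ lam (o k) := hpos
  have hμle : ∀ k : Fin (n+1), lam (o k) ≤ 1 := by
    intro k
    rw [← h0]
    exact hmono 0 (o k) (Fin.zero_le _)
  set c : Fin (n+1) → ℝ := fun k => Real.sqrt (1 - lam (o k)) with hcdef
  have hcsq : ∀ k : Fin (n+1), (c k)^2 = 1 - lam (o k) := by
    intro k
    rw [hcdef]
    exact Real.sq_sqrt (by linarith [hμle k])
  -- the ν-reindexing of lam
  set ν : ℕ → ℝ := fun i => lam ⟨i % (2*n+3), Nat.mod_lt _ hn3⟩ with hν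
  have hνval : ∀ (i : ℕ) (h : i < 2*n+3), ν i = lam ⟨i, h⟩ := by
    intro i h
    have hfin : (⟨i % (2*n+3), Nat.mod_lt i hn3⟩ : Fin (2*n+3)) = ⟨i, h⟩ := by
      apply Fin.ext
      simpa using Nat.mod_eq_of_lt h
    show lam ⟨i % (2*n+3), Nat.mod_lt i hn3⟩ = lam ⟨i, h⟩
    rw [hfin]
  have e1 : ∑ a : Fin (2*n+3), lam a = ∑ i ∈ Finset.range (2*n+3), ν i := by
    rw [← Fin.sum_univ_eq_sum_range ν (2*n+3)]
    refine Finset.sum_congr rfl fun a _ => ?_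
    rw [hνval a.1 a.2]
  have e2 : ∑ i ∈ Finset.range (2*n+3), ν i
      = ∑ i ∈ Finset.range (2*n+2), ν (i+1) + ν 0 := by
    rw [show (2*n+3) = (2*n+2)+1 from rfl, Finset.sum_range_succ']
  have e3 : ∑ i ∈ Finset.range (2*n+2), ν (i+1)
      = ∑ j ∈ Finset.range (n+1), (ν (2*j+1) + ν (2*j+2)) := by
    rw [show 2*n+2 = 2*(n+1) by ring, ColemanAux.pair_range_sum (fun i => ν (i+1)) (n+1)]
  have e5 : ∑ j ∈ Finset.range (n+1), (ν (2*j+1) + ν (2*j+2))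
      = 2 * ∑ j ∈ Finset.range (n+1), ν (2*j+1) := by
    rw [Finset.mul_sum]
    refine Finset.sum_congr rfl fun j hj => ?_
    have hj' : j < n+1 := Finset.mem_range.mp hj
    have h2 : ν (2*j+2) = ν (2*j+1) := by
      rw [hνval _ (by omega), hνval _ (by omega)]
      exact (hpair' ⟨j, hj'⟩).symm
    rw [h2]
    ring
  have e6 : ∑ j ∈ Finset.range (n+1), ν (2*j+1) = ∑ k : Fin (n+1), lam (o k) := by
    rw [← Fin.sum_univ_eq_sum_range (fun j => ν (2*j+1)) (n+1)]
    refine Finset.sum_congr rfl fun k _ => ?_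
    rw [hνval _ (by have := k.2; omega)]
  have hν0 : ν 0 = 1 := by
    rw [hνval 0 (by omega)]
    exact h0
  have hfac : ∑ k : Fin (n+1), lam (o k) = n := by
    have := hsum
    rw [e1, e2, e3, e5, e6, hν0] at this
    linarith
  have hsum1 : ∑ k : Fin (n+1), (c k)^2 = 1 := by
    calc ∑ k : Fin (n+1), (c k)^2 = ∑ k : Fin (n+1), (1 - lam (o k)) :=
          Finset.sum_congr rfl fun k _ => hcsq k
      _ = (n+1 : ℝ) - ∑ k : Fin (n+1), lam (o k) := by
          rw [Finset.sum_sub_distrib, Finset.sum_const, Finset.card_univ, Fintype.card_fin]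
          simp
      _ = 1 := by rw [hfac]; ring
  have hdiag : ∀ a : Fin (2*n+3),
      ∑ k : Fin (n+1), (c k)^2 *
        (if (a.1 = 0 ∨ (1 ≤ a.1 ∧ (a.1-1)/2 ≠ k.1)) then (1:ℝ) else 0) = lam a := by
    intro a
    by_cases ha0 : a.1 = 0
    · have ha : a = 0 := Fin.ext ha0
      calc ∑ k : Fin (n+1), (c k)^2 *
              (if (a.1 = 0 ∨ (1 ≤ a.1 ∧ (a.1-1)/2 ≠ k.1)) then (1:ℝ) else 0)
          = ∑ k : Fin (n+1), (c k)^2 :=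
            Finset.sum_congr rfl fun k _ => by rw [if_pos (Or.inl ha0), mul_one]
        _ = 1 := hsum1
        _ = lam a := by rw [ha, h0]
    · have ha1 : 1 ≤ a.1 := by omega
      have haj : (a.1-1)/2 < n+1 := by have := a.2; omega
      set j₀ : Fin (n+1) := ⟨(a.1-1)/2, haj⟩ with hj₀
      have hj₀v : j₀.1 = (a.1-1)/2 := rfl
      have hcond : ∀ k : Fin (n+1),
          ((a.1 = 0 ∨ (1 ≤ a.1 ∧ (a.1-1)/2 ≠ k.1))) ↔ ¬ (k = j₀) := by
        intro k
        constructor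
        · rintro (h | ⟨-, h⟩) heq
          · exact ha0 h
          · subst heq
            exact h rfl
        · intro hne
          exact Or.inr ⟨ha1, fun hh => hne (Fin.ext hh.symm)⟩
      calc ∑ k : Fin (n+1), (c k)^2 *
              (if (a.1 = 0 ∨ (1 ≤ a.1 ∧ (a.1-1)/2 ≠ k.1)) then (1:ℝ) else 0)
          = ∑ k : Fin (n+1), ((c k)^2 - (if k = j₀ then (c k)^2 else 0)) := by
            refine Finset.sum_congr rfl fun k _ => ?_
            rw [if_congr (hcond k) rfl rfl]
            by_cases h : k = j₀ <;> simp [h]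
        _ = (∑ k : Fin (n+1), (c k)^2) - ∑ k : Fin (n+1), (if k = j₀ then (c k)^2 else 0) :=
            Finset.sum_sub_distrib _ _
        _ = 1 - (c j₀)^2 := by
            rw [hsum1, Finset.sum_ite_eq' Finset.univ j₀ (fun k => (c k)^2),
              if_pos (Finset.mem_univ _)]
        _ = lam (o j₀) := by rw [hcsq j₀]; ring
        _ = lam a := by
            have hcase : a.1 = 2*j₀.1+1 ∨ a.1 = 2*j₀.1+2 := by
              have := a.2
              omega
            rcases hcase with hcase | hcase
            · congr 1
              exact Fin.ext (by rw [ho]; exact hcase.symm)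
            · rw [hpair' j₀]
              congr 1
              exact Fin.ext (by rw [hoo]; exact hcase.symm)
  have hsumC : ∑ k : Fin (n+1), (((c k : ℝ) : ℂ))^2 = 1 := by
    have h1 : ((∑ k : Fin (n+1), (c k)^2 : ℝ) : ℂ) = ((1 : ℝ) : ℂ) := by
      rw [hsum1]
    push_cast at h1
    exact h1
  refine ⟨ColemanAux.xw n c, ?_, ?_, ?_, ?_⟩
  · intro σ f
    exact ColemanAux.xw_comp n c f σ
  · intro f hf
    exact ColemanAux.xw_zero_of_not_inj n c f hf
  · calc ∑ f, ‖ColemanAux.xw n c f‖ ^ 2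
        = ∑ f, (ColemanAux.xw n c f * (starRingEnd ℂ) (ColemanAux.xw n c f)).re := by
          refine Finset.sum_congr rfl fun f _ => ?_
          rw [Complex.mul_conj, Complex.ofReal_re, Complex.sq_norm]
      _ = (∑ f, ColemanAux.xw n c f * (starRingEnd ℂ) (ColemanAux.xw n c f)).re := by
          rw [Complex.re_sum]
      _ = (∑ f, ColemanAux.xw n c f * ColemanAux.xw n c f).re := by
          congr 1
          exact Finset.sum_congr rfl fun f _ => by rw [ColemanAux.conj_xw]
      _ = (((2*n+1).factorial : ℂ)).re := by
          rw [ColemanAux.xw_self_sum, hsumC, one_mul]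
      _ = ((2*n+1).factorial : ℝ) := by
          simp
  · intro a b
    have hrw : ∀ (v : Fin (2*n+3)) (j : Fin (2*n) → Fin (2*n+3)),
        ColemanAux.xw n c (Matrix.vecCons v j) = ColemanAux.xw n c (Fin.cons v j) :=
      fun _ _ => rfl
    simp only [hrw, ColemanAux.conj_xw]
    rw [ColemanAux.xw_pair_sum n c a b]
    by_cases hab : a = b
    · rw [if_pos hab, ← hab, Matrix.diagonal_apply_eq]
      have hfacne : ((2*n).factorial : ℂ) ≠ 0 := by
        exact_mod_cast Nat.cast_ne_zero.mpr (Nat.factorial_ne_zero (2*n))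
      have hC : ∑ k : Fin (n+1), (((c k : ℝ):ℂ))^2 *
          (if ∃ i, ColemanAux.E n k i = a then ((2*n).factorial : ℂ) else 0)
          = ((2*n).factorial : ℂ) * ((lam a : ℝ) : ℂ) := by
        have hstep : ∀ k : Fin (n+1),
            (((c k : ℝ):ℂ))^2 * (if ∃ i, ColemanAux.E n k i = a then ((2*n).factorial : ℂ) else 0)
            = ((2*n).factorial : ℂ) * ((((c k)^2 * (if (a.1 = 0 ∨ (1 ≤ a.1 ∧ (a.1-1)/2 ≠ k.1)) then (1:ℝ) else 0) : ℝ)) : ℂ) := by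
          intro k
          rw [if_congr (ColemanAux.E_mem n k a) rfl rfl]
          by_cases h : (a.1 = 0 ∨ (1 ≤ a.1 ∧ (a.1-1)/2 ≠ k.1))
          · rw [if_pos h, if_pos h]
            push_cast
            ring
          · rw [if_neg h, if_neg h]
            push_cast
            ring
        rw [Finset.sum_congr rfl fun k _ => hstep k, ← Finset.mul_sum]
        congr 1
        rw [← Complex.ofReal_sum]
        rw [hdiag a]
      rw [hC]
      field_simp
    · rw [if_neg hab, Matrix.diagonal_apply_ne _ hab, mul_zero]
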